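/- If the prime factorization of n contains two or more primes appearing to odd exponent, then ν₂(n) is even. -/

import Mathlib

set_option linter.unusedSectionVars false

def numPartSizes {n : ℕ} (p : n.Partition) : ℕ := p.parts.toFinset.card

/-- `nu k n` is the number of partitions of `n` into exactly `k` distinct part sizes. -/
def nu (k n : ℕ) : ℕ := Finset.card (Finset.univ.filter (fun p : n.Partition => numPartSizes p = k))

/-- Flip the `p`-part of `d` within total exponent `v`. -/
def flp (p v d : ℕ) : ℕ := (d / p ^ d.factorization p) * p ^ (v - d.factorization p)

section flp
variable {p v n q d e : ℕ} (hp : p.Prime)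
include hp

lemma flp_pos (hd : d ≠ 0) : 0 < flp p v d :=
  Nat.mul_pos (Nat.ordCompl_pos p hd) (pow_pos hp.pos _)

lemma flp_factorization_p (hd : d ≠ 0) : (flp p v d).factorization p = v - d.factorization p := by
  unfold flp
  rw [Nat.factorization_mul (Nat.ordCompl_pos p hd).ne' (pow_ne_zero _ hp.pos.ne')]
  simp [Nat.factorization_ordCompl, hp.factorization]

lemma flp_factorization_q (hq : q ≠ p) (hd : d ≠ 0) :
    (flp p v d).factorization q = d.factorization q := by
  unfold flp
  rw [Nat.factorization_mul (Nat.ordCompl_pos p hd).ne' (pow_ne_zero _ hp.pos.ne')]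
  simp [Nat.factorization_ordCompl, hp.factorization, Finsupp.erase_ne hq, Finsupp.single_apply,
    Ne.symm hq]

lemma flp_ordCompl (hd : d ≠ 0) :
    (flp p v d) / p ^ (flp p v d).factorization p = d / p ^ d.factorization p := by
  rw [flp_factorization_p hp hd]
  exact Nat.mul_div_cancel _ (pow_pos hp.pos _)

lemma flp_flp (hd : d ≠ 0) (hβ : d.factorization p ≤ v) : flp p v (flp p v d) = d := by
  show (flp p v d / p ^ (flp p v d).factorization p) * p ^ (v - (flp p v d).factorization p) = d
  rw [flp_ordCompl hp hd, flp_factorization_p hp hd, Nat.sub_sub_self hβ, mul_comm]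
  exact Nat.ordProj_mul_ordCompl_eq_self d p

lemma flp_dvd (hn : n ≠ 0) (hd : d ∣ n) (hv : v = n.factorization p) : flp p v d ∣ n := by
  have h1 : (d / p ^ d.factorization p) ∣ (n / p ^ n.factorization p) :=
    Nat.ordCompl_dvd_ordCompl_of_dvd hd p
  have h2 : p ^ (v - d.factorization p) ∣ p ^ n.factorization p :=
    pow_dvd_pow p (by omega)
  calc flp p v d ∣ (n / p ^ n.factorization p) * p ^ n.factorization p :=
        mul_dvd_mul h1 h2
    _ = n := by rw [mul_comm]; exact Nat.ordProj_mul_ordCompl_eq_self n p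

lemma flp_mul (hn : n ≠ 0) (hde : d * e = n) (hv : v = n.factorization p) :
    flp p v d * flp p v e = n := by
  subst hv
  have hd0 : d ≠ 0 := by rintro rfl; simp at hde; omega
  have he0 : e ≠ 0 := by rintro rfl; simp at hde; omega
  have hadd : d.factorization p + e.factorization p = n.factorization p := by
    rw [← hde, Nat.factorization_mul hd0 he0]; rfl
  have hoc : (d / p ^ d.factorization p) * (e / p ^ e.factorization p)
      = n / p ^ n.factorization p := by
    have hppos : 0 < p ^ n.factorization p := pow_pos hp.pos _
    apply Nat.eq_of_mul_eq_mul_right hppos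
    calc (d / p ^ d.factorization p) * (e / p ^ e.factorization p) * p ^ n.factorization p
        = ((d / p ^ d.factorization p) * p ^ d.factorization p) *
          ((e / p ^ e.factorization p) * p ^ e.factorization p) := by
          conv_rhs => rw [mul_mul_mul_comm, ← pow_add, hadd]
      _ = d * e := by
          rw [mul_comm (d / p ^ d.factorization p), mul_comm (e / p ^ e.factorization p),
            Nat.ordProj_mul_ordCompl_eq_self, Nat.ordProj_mul_ordCompl_eq_self]
      _ = (n / p ^ n.factorization p) * p ^ n.factorization p := by
          rw [hde, mul_comm]; exact (Nat.ordProj_mul_ordCompl_eq_self n p).symm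
  have hβd : d.factorization p ≤ n.factorization p := by omega
  have hβe : e.factorization p ≤ n.factorization p := by omega
  unfold flp
  calc (d / p ^ d.factorization p) * p ^ (n.factorization p - d.factorization p) *
      ((e / p ^ e.factorization p) * p ^ (n.factorization p - e.factorization p))
      = ((d / p ^ d.factorization p) * (e / p ^ e.factorization p)) *
        (p ^ (n.factorization p - d.factorization p) * p ^ (n.factorization p - e.factorization p)) := by
        ring
    _ = (n / p ^ n.factorization p) * p ^ n.factorization p := by
        rw [hoc, ← pow_add, show (n.factorization p - d.factorization p) +
          (n.factorization p - e.factorization p) = n.factorization p from by omega]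
    _ = n := by rw [mul_comm]; exact Nat.ordProj_mul_ordCompl_eq_self n p

lemma flp_parity (hp2 : p ≠ 2) (hd : d ≠ 0) : (2 ∣ flp p v d ↔ 2 ∣ d) := by
  have hodd : ∀ k : ℕ, ¬ (2 ∣ p ^ k) := by
    intro k h
    have := Nat.Prime.dvd_of_dvd_pow (p := 2) Nat.prime_two h
    rcases (Nat.prime_dvd_prime_iff_eq Nat.prime_two hp).1 this with rfl
    exact hp2 rfl
  constructor
  · intro h
    rcases (Nat.Prime.dvd_mul Nat.prime_two).1 h with h | h
    · exact h.trans (Nat.div_dvd_of_dvd (Nat.ordProj_dvd d p))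
    · exact absurd h (hodd _)
  · intro h
    have : 2 ∣ (d / p ^ d.factorization p) * p ^ d.factorization p := by
      rw [mul_comm, Nat.ordProj_mul_ordCompl_eq_self]; exact h
    rcases (Nat.Prime.dvd_mul Nat.prime_two).1 this with h' | h'
    · exact h'.mul_right _
    · exact absurd h' (hodd _)

lemma flp_ne_self (hvodd : Odd v) (hβ : d.factorization p ≤ v) (hd : d ≠ 0) : flp p v d ≠ d := by
  intro h
  have h2 := flp_factorization_p (v := v) hp hd
  rw [h] at h2
  obtain ⟨k, hk⟩ := hvodd
  omega

end flp

lemma even_card_invol {α : Type*} [DecidableEq α] :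
    ∀ (s : Finset α) (f : α → α), (∀ x ∈ s, f x ∈ s) → (∀ x ∈ s, f (f x) = x) →
      (∀ x ∈ s, f x ≠ x) → Even s.card := by
  intro s
  induction s using Finset.strongInduction with
  | _ s ih =>
    intro f hmem hinv hne
    rcases s.eq_empty_or_nonempty with rfl | ⟨x, hx⟩
    · simp
    · have hfx := hmem x hx
      have hxne := hne x hx
      have hsub : ({x, f x} : Finset α) ⊆ s := by
        intro y hy
        simp only [Finset.mem_insert, Finset.mem_singleton] at hy
        rcases hy with rfl | rfl <;> assumption
      set t := s \ {x, f x} with ht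
      have htss : t ⊂ s := by
        apply Finset.sdiff_ssubset hsub
        exact ⟨x, Finset.mem_insert_self _ _⟩
      have hcard : s.card = t.card + 2 := by
        have h2 : ({x, f x} : Finset α).card = 2 := Finset.card_pair (Ne.symm hxne)
        have h3 := Finset.card_sdiff_of_subset hsub
        have h4 := Finset.card_le_card hsub
        rw [h2] at h3 h4
        rw [ht]
        omega
      have hmemt : ∀ y ∈ t, y ∈ s ∧ y ≠ x ∧ y ≠ f x := by
        intro y hy
        rw [ht] at hy
        simp only [Finset.mem_sdiff, Finset.mem_insert, Finset.mem_singleton] at hy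
        tauto
      have hmapt : ∀ y ∈ t, f y ∈ t := by
        intro y hy
        obtain ⟨hys, hyx, hyfx⟩ := hmemt y hy
        rw [ht]
        simp only [Finset.mem_sdiff, Finset.mem_insert, Finset.mem_singleton]
        refine ⟨hmem y hys, ?_⟩
        rintro (h | h)
        · exact hyfx (by rw [← h, hinv y hys])
        · have : f (f y) = f (f x) := by rw [h]
          rw [hinv y hys, hinv x hx] at this
          exact hyx this
      have := ih t htss f hmapt (fun y hy => hinv y (hmemt y hy).1)
        (fun y hy => hne y (hmemt y hy).1)
      rw [hcard]
      obtain ⟨k, hk⟩ := this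
      exact ⟨k + 1, by omega⟩

/-- quadruples (a,b,i,j) : parts a > b with multiplicities i, j. -/
def Squad (n : ℕ) : Finset (ℕ × ℕ × ℕ × ℕ) :=
  (Finset.range (n+1) ×ˢ Finset.range (n+1) ×ˢ Finset.range (n+1) ×ˢ Finset.range (n+1)).filter
    fun x => 0 < x.2.1 ∧ x.2.1 < x.1 ∧ 0 < x.2.2.1 ∧ 0 < x.2.2.2 ∧
      x.2.2.1 * x.1 + x.2.2.2 * x.2.1 = n

lemma mem_Squad {n : ℕ} {x : ℕ × ℕ × ℕ × ℕ} :
    x ∈ Squad n ↔ 0 < x.2.1 ∧ x.2.1 < x.1 ∧ 0 < x.2.2.1 ∧ 0 < x.2.2.2 ∧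
      x.2.2.1 * x.1 + x.2.2.2 * x.2.1 = n := by
  obtain ⟨a, b, i, j⟩ := x
  simp only [Squad, Finset.mem_filter, Finset.mem_product, Finset.mem_range, Nat.lt_succ_iff]
  constructor
  · tauto
  · rintro ⟨h1, h2, h3, h4, h5⟩
    refine ⟨⟨?_, ?_, ?_, ?_⟩, h1, h2, h3, h4, h5⟩
    · have : a ≤ i * a := Nat.le_mul_of_pos_left a h3
      omega
    · have : b ≤ j * b := Nat.le_mul_of_pos_left b h4
      omega
    · have : i ≤ i * a := Nat.le_mul_of_pos_right i (by omega)
      omega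
    · have : j ≤ j * b := Nat.le_mul_of_pos_right j h1
      omega

/-- The involution on quadruples: conjugation, except on conjugation-fixed points apply
the `p`-part flip. -/
def gmap (p v : ℕ) : ℕ × ℕ × ℕ × ℕ → ℕ × ℕ × ℕ × ℕ
  | (a, b, i, j) =>
    if a = b + j ∧ i = b then
      let B := min (flp p v b) (flp p v (b + 2 * j))
      let C := max (flp p v b) (flp p v (b + 2 * j))
      (B + (C - B) / 2, B, B, (C - B) / 2)
    else (i + j, i, b, a - b)

lemma fact_le_of_dvd {n p v d : ℕ} (hn : n ≠ 0) (hv : v = n.factorization p)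
    (hd : d ≠ 0) (hdn : d ∣ n) : d.factorization p ≤ v := by
  rw [hv]; exact (Nat.factorization_le_iff_dvd hd hn).2 hdn p

lemma fixed_core {n p v b j : ℕ} (hp : p.Prime) (hp2 : p ≠ 2) (hn : n ≠ 0)
    (hv : v = n.factorization p) (hpv : Odd v)
    (hb : 0 < b) (hj : 0 < j) (hsum : b * (b + 2 * j) = n) :
    0 < min (flp p v b) (flp p v (b + 2 * j)) ∧
    min (flp p v b) (flp p v (b + 2 * j)) < max (flp p v b) (flp p v (b + 2 * j)) ∧
    2 ∣ (max (flp p v b) (flp p v (b + 2 * j)) - min (flp p v b) (flp p v (b + 2 * j))) ∧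
    (min (flp p v b) (flp p v (b + 2 * j))) * (max (flp p v b) (flp p v (b + 2 * j))) = n := by
  have hb0 : b ≠ 0 := hb.ne'
  have hc0 : b + 2 * j ≠ 0 := by omega
  have hbdvd : b ∣ n := ⟨b + 2 * j, hsum.symm⟩
  have hcdvd : (b + 2 * j) ∣ n := ⟨b, by rw [← hsum]; ring⟩
  have hβb : b.factorization p ≤ v := fact_le_of_dvd hn hv hb0 hbdvd
  have hβc : (b + 2 * j).factorization p ≤ v := fact_le_of_dvd hn hv hc0 hcdvd
  have hne : flp p v b ≠ flp p v (b + 2 * j) := by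
    intro h
    have h2 := congrArg (flp p v) h
    rw [flp_flp hp hb0 hβb, flp_flp hp hc0 hβc] at h2
    omega
  refine ⟨?_, ?_, ?_, ?_⟩
  · exact lt_min (flp_pos hp hb0) (flp_pos hp hc0)
  · exact min_lt_max.2 hne
  · have h1 := flp_parity (v := v) hp hp2 hb0
    have h2 := flp_parity (v := v) hp hp2 hc0
    have h3 : (2 ∣ flp p v b) ↔ (2 ∣ flp p v (b + 2 * j)) := by rw [h1, h2]; omega
    rcases le_total (flp p v b) (flp p v (b + 2 * j)) with h | h
    · rw [min_eq_left h, max_eq_right h]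
      rcases Nat.even_or_odd b with he | he
      · have e1 : 2 ∣ flp p v b := h1.2 he.two_dvd
        have e2 := h3.1 e1
        omega
      · have e1 : ¬ (2 ∣ flp p v b) := fun hh => (Nat.not_even_iff_odd.2 he)
          (even_iff_two_dvd.2 (h1.1 hh))
        have e2 : ¬ (2 ∣ flp p v (b + 2 * j)) := fun hh => e1 (h3.2 hh)
        omega
    · rw [min_eq_right h, max_eq_left h]
      rcases Nat.even_or_odd b with he | he
      · have e1 : 2 ∣ flp p v b := h1.2 he.two_dvd
        have e2 := h3.1 e1
        omega
      · have e1 : ¬ (2 ∣ flp p v b) := fun hh => (Nat.not_even_iff_odd.2 he)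
          (even_iff_two_dvd.2 (h1.1 hh))
        have e2 : ¬ (2 ∣ flp p v (b + 2 * j)) := fun hh => e1 (h3.2 hh)
        omega
  · rcases le_total (flp p v b) (flp p v (b + 2 * j)) with h | h
    · rw [min_eq_left h, max_eq_right h]
      exact flp_mul hp hn hsum hv
    · rw [min_eq_right h, max_eq_left h, mul_comm]
      exact flp_mul hp hn hsum hv

lemma mem_Squad' {n a b i j : ℕ} : (a, b, i, j) ∈ Squad n ↔
    0 < b ∧ b < a ∧ 0 < i ∧ 0 < j ∧ i * a + j * b = n := mem_Squad

lemma gmap_mem {n p v : ℕ} (hp : p.Prime) (hp2 : p ≠ 2) (hn : n ≠ 0)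
    (hv : v = n.factorization p) (hpv : Odd v) :
    ∀ x ∈ Squad n, gmap p v x ∈ Squad n := by
  rintro ⟨a, b, i, j⟩ hx
  rw [mem_Squad'] at hx
  obtain ⟨hb, hba, hi, hj, hsum⟩ := hx
  by_cases hfix : a = b + j ∧ i = b
  · obtain ⟨h1, h2⟩ := hfix
    have hsum' : b * (b + 2 * j) = n := by rw [← hsum, h1, h2]; ring
    obtain ⟨k1, k2, k3, k4⟩ := fixed_core hp hp2 hn hv hpv hb hj hsum'
    set B := min (flp p v b) (flp p v (b + 2 * j)) with hB
    set C := max (flp p v b) (flp p v (b + 2 * j)) with hC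
    have hg : gmap p v (a, b, i, j) = (B + (C - B) / 2, B, B, (C - B) / 2) := by
      simp [gmap, h1, h2, hB, hC]
    rw [hg, mem_Squad']
    refine ⟨k1, by omega, k1, by omega, ?_⟩
    have hCB : C = B + 2 * ((C - B) / 2) := by omega
    calc B * (B + (C - B) / 2) + (C - B) / 2 * B = B * (B + 2 * ((C - B) / 2)) := by ring
      _ = B * C := by rw [← hCB]
      _ = n := k4
  · have hg : gmap p v (a, b, i, j) = (i + j, i, b, a - b) := by
      simp only [gmap, if_neg hfix]
    rw [hg, mem_Squad']
    refine ⟨hi, by omega, hb, by omega, ?_⟩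
    obtain ⟨k, rfl⟩ : ∃ k, a = b + (k + 1) := ⟨a - b - 1, by omega⟩
    have hr : b + (k + 1) - b = k + 1 := by omega
    rw [hr, ← hsum]
    ring

lemma gmap_invol {n p v : ℕ} (hp : p.Prime) (hp2 : p ≠ 2) (hn : n ≠ 0)
    (hv : v = n.factorization p) (hpv : Odd v) :
    ∀ x ∈ Squad n, gmap p v (gmap p v x) = x := by
  rintro ⟨a, b, i, j⟩ hx
  rw [mem_Squad'] at hx
  obtain ⟨hb, hba, hi, hj, hsum⟩ := hx
  by_cases hfix : a = b + j ∧ i = b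
  · obtain ⟨h1, h2⟩ := hfix
    have hb0 : b ≠ 0 := hb.ne'
    have hc0 : b + 2 * j ≠ 0 := by omega
    have hsum' : b * (b + 2 * j) = n := by rw [← hsum, h1, h2]; ring
    have hbdvd : b ∣ n := ⟨b + 2 * j, hsum'.symm⟩
    have hcdvd : (b + 2 * j) ∣ n := ⟨b, by rw [← hsum']; ring⟩
    have hβb : b.factorization p ≤ v := fact_le_of_dvd hn hv hb0 hbdvd
    have hβc : (b + 2 * j).factorization p ≤ v := fact_le_of_dvd hn hv hc0 hcdvd
    obtain ⟨k1, k2, k3, k4⟩ := fixed_core hp hp2 hn hv hpv hb hj hsum'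
    set B := min (flp p v b) (flp p v (b + 2 * j)) with hB
    set C := max (flp p v b) (flp p v (b + 2 * j)) with hC
    have hg : gmap p v (a, b, i, j) = (B + (C - B) / 2, B, B, (C - B) / 2) := by
      simp [gmap, h1, h2, hB, hC]
    have hCB : B + 2 * ((C - B) / 2) = C := by omega
    have hg2 : gmap p v (B + (C - B) / 2, B, B, (C - B) / 2) =
        (min (flp p v B) (flp p v C) +
          (max (flp p v B) (flp p v C) - min (flp p v B) (flp p v C)) / 2,
         min (flp p v B) (flp p v C), min (flp p v B) (flp p v C),
         (max (flp p v B) (flp p v C) - min (flp p v B) (flp p v C)) / 2) := by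
      simp [gmap, hCB]
    have hminmax : min (flp p v B) (flp p v C) = b ∧ max (flp p v B) (flp p v C) = b + 2 * j := by
      rcases le_total (flp p v b) (flp p v (b + 2 * j)) with h | h
      · have eB : B = flp p v b := min_eq_left h
        have eC : C = flp p v (b + 2 * j) := max_eq_right h
        rw [eB, eC, flp_flp hp hb0 hβb, flp_flp hp hc0 hβc]
        constructor
        · exact min_eq_left (by omega)
        · exact max_eq_right (by omega)
      · have eB : B = flp p v (b + 2 * j) := min_eq_right h
        have eC : C = flp p v b := max_eq_left h
        rw [eB, eC, flp_flp hp hb0 hβb, flp_flp hp hc0 hβc]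
        constructor
        · exact min_eq_right (by omega)
        · exact max_eq_left (by omega)
    rw [hg, hg2, hminmax.1, hminmax.2]
    have : (b + 2 * j - b) / 2 = j := by omega
    rw [this, h1, h2]
  · have hg : gmap p v (a, b, i, j) = (i + j, i, b, a - b) := by
      simp only [gmap, if_neg hfix]
    have hfix2 : ¬ (i + j = i + (a - b) ∧ b = i) := by
      rintro ⟨e1, e2⟩
      exact hfix ⟨by omega, by omega⟩
    have hg2 : gmap p v (i + j, i, b, a - b) = (b + (a - b), b, i, (i + j) - i) := by
      simp only [gmap, if_neg hfix2]
    rw [hg, hg2]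
    have e1 : b + (a - b) = a := by omega
    have e2 : (i + j) - i = j := by omega
    rw [e1, e2]

lemma gmap_ne {n p v q : ℕ} (hp : p.Prime) (hp2 : p ≠ 2) (hn : n ≠ 0)
    (hv : v = n.factorization p) (hpv : Odd v)
    (hqp : q ≠ p) (hqv : Odd (n.factorization q)) :
    ∀ x ∈ Squad n, gmap p v x ≠ x := by
  rintro ⟨a, b, i, j⟩ hx heq
  rw [mem_Squad'] at hx
  obtain ⟨hb, hba, hi, hj, hsum⟩ := hx
  by_cases hfix : a = b + j ∧ i = b
  · obtain ⟨h1, h2⟩ := hfix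
    have hb0 : b ≠ 0 := hb.ne'
    have hc0 : b + 2 * j ≠ 0 := by omega
    have hsum' : b * (b + 2 * j) = n := by rw [← hsum, h1, h2]; ring
    have hbdvd : b ∣ n := ⟨b + 2 * j, hsum'.symm⟩
    have hcdvd : (b + 2 * j) ∣ n := ⟨b, by rw [← hsum']; ring⟩
    have hβb : b.factorization p ≤ v := fact_le_of_dvd hn hv hb0 hbdvd
    have hβc : (b + 2 * j).factorization p ≤ v := fact_le_of_dvd hn hv hc0 hcdvd
    obtain ⟨k1, k2, k3, k4⟩ := fixed_core hp hp2 hn hv hpv hb hj hsum'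
    set B := min (flp p v b) (flp p v (b + 2 * j)) with hB
    set C := max (flp p v b) (flp p v (b + 2 * j)) with hC
    have hg : gmap p v (a, b, i, j) = (B + (C - B) / 2, B, B, (C - B) / 2) := by
      simp [gmap, h1, h2, hB, hC]
    rw [hg] at heq
    have eB : B = b := by
      have := congrArg (fun z : ℕ × ℕ × ℕ × ℕ => z.2.1) heq
      simpa using this
    have eJ : (C - B) / 2 = j := by
      have := congrArg (fun z : ℕ × ℕ × ℕ × ℕ => z.2.2.2) heq
      simpa using this
    have eC : C = b + 2 * j := by omega
    rcases le_total (flp p v b) (flp p v (b + 2 * j)) with h | h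
    · have : flp p v b = b := by rw [← min_eq_left h, ← hB, eB]
      exact flp_ne_self hp hpv hβb hb0 this
    · have hflpc : flp p v (b + 2 * j) = b := by rw [← min_eq_right h, ← hB, eB]
      have hflpb : flp p v b = b + 2 * j := by
        have := congrArg (flp p v) hflpc
        rw [flp_flp hp hc0 hβc] at this
        omega
      have hnq : n = b * flp p v b := by rw [hflpb, hsum']
      have hfq : (b * flp p v b).factorization q
          = b.factorization q + (flp p v b).factorization q := by
        rw [Nat.factorization_mul hb0 (flp_pos hp hb0).ne']
        rfl
      rw [flp_factorization_q hp hqp hb0] at hfq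
      rw [hnq] at hqv
      rw [hfq] at hqv
      obtain ⟨k, hk⟩ := hqv
      omega
  · have hg : gmap p v (a, b, i, j) = (i + j, i, b, a - b) := by
      simp only [gmap, if_neg hfix]
    rw [hg] at heq
    have e1 : i + j = a := congrArg (fun z : ℕ × ℕ × ℕ × ℕ => z.1) heq
    have e2 : i = b := congrArg (fun z : ℕ × ℕ × ℕ × ℕ => z.2.1) heq
    exact hfix ⟨by omega, e2⟩

lemma pair_union {a b : ℕ} : ({a} ∪ {b} : Finset ℕ) = {a, b} := by ext x; simp

def toPart (n : ℕ) (x : ℕ × ℕ × ℕ × ℕ) (h : x ∈ Squad n) : n.Partition where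
  parts := Multiset.replicate x.2.2.1 x.1 + Multiset.replicate x.2.2.2 x.2.1
  parts_pos := by
    intro y hy
    obtain ⟨h1, h2, h3, h4, h5⟩ := mem_Squad.1 h
    rcases Multiset.mem_add.1 hy with hm | hm
    · rw [Multiset.eq_of_mem_replicate hm]; omega
    · rw [Multiset.eq_of_mem_replicate hm]; omega
  parts_sum := by
    obtain ⟨h1, h2, h3, h4, h5⟩ := mem_Squad.1 h
    rw [Multiset.sum_add, Multiset.sum_replicate, Multiset.sum_replicate, smul_eq_mul,
      smul_eq_mul]
    exact h5

lemma toPart_parts {n a b i j : ℕ} (h : (a, b, i, j) ∈ Squad n) :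
    (toPart n (a, b, i, j) h).parts = Multiset.replicate i a + Multiset.replicate j b := rfl

lemma toPart_mem {n : ℕ} (x : ℕ × ℕ × ℕ × ℕ) (hx : x ∈ Squad n) :
    toPart n x hx ∈ Finset.univ.filter (fun p : n.Partition => numPartSizes p = 2) := by
  obtain ⟨a, b, i, j⟩ := x
  obtain ⟨h1, h2, h3, h4, h5⟩ := mem_Squad'.1 hx
  rw [Finset.mem_filter]
  refine ⟨Finset.mem_univ _, ?_⟩
  unfold numPartSizes
  rw [toPart_parts, Multiset.toFinset_add, Multiset.toFinset_replicate,
    Multiset.toFinset_replicate, if_neg h3.ne', if_neg h4.ne', pair_union]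
  rw [Finset.card_insert_of_notMem (by simp; omega)]
  simp

lemma repl_inj {a b i j a' b' i' j' : ℕ} (hba : b < a) (hb'a' : b' < a')
    (hi : 0 < i) (hj : 0 < j) (hi' : 0 < i') (hj' : 0 < j')
    (h : Multiset.replicate i a + Multiset.replicate j b
       = Multiset.replicate i' a' + Multiset.replicate j' b') :
    a = a' ∧ b = b' ∧ i = i' ∧ j = j' := by
  have hT : ({a, b} : Finset ℕ) = {a', b'} := by
    have h2 := congrArg Multiset.toFinset h
    rw [Multiset.toFinset_add, Multiset.toFinset_add, Multiset.toFinset_replicate,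
      Multiset.toFinset_replicate, Multiset.toFinset_replicate, Multiset.toFinset_replicate,
      if_neg hi.ne', if_neg hj.ne', if_neg hi'.ne', if_neg hj'.ne',
      pair_union, pair_union] at h2
    exact h2
  have haa : a = a' ∨ a = b' := by
    have : a ∈ ({a', b'} : Finset ℕ) := hT ▸ (Finset.mem_insert_self a {b})
    simpa using this
  have hbb : b = a' ∨ b = b' := by
    have : b ∈ ({a', b'} : Finset ℕ) := hT ▸ (by simp : b ∈ ({a, b} : Finset ℕ))
    simpa using this
  have ha'a : a' = a ∨ a' = b := by
    have : a' ∈ ({a, b} : Finset ℕ) := hT ▸ (Finset.mem_insert_self a' {b'})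
    simpa using this
  have hab : a = a' ∧ b = b' := by
    rcases haa with h1 | h1 <;> rcases hbb with h2 | h2 <;> rcases ha'a with h3 | h3 <;> omega
  obtain ⟨e1, e2⟩ := hab
  subst e1; subst e2
  have ci := congrArg (Multiset.count a) h
  have cj := congrArg (Multiset.count b) h
  rw [Multiset.count_add, Multiset.count_add, Multiset.count_replicate,
    Multiset.count_replicate, Multiset.count_replicate, Multiset.count_replicate] at ci cj
  rw [if_pos rfl, if_pos rfl, if_neg (by omega : ¬ b = a), if_neg (by omega : ¬ b = a)] at ci
  rw [if_pos rfl, if_pos rfl, if_neg (by omega : ¬ a = b), if_neg (by omega : ¬ a = b)] at cj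
  omega

lemma toPart_surj_aux {n : ℕ} (pt : n.Partition) (u w : ℕ) (hwu : w < u)
    (hT : pt.parts.toFinset = {u, w}) :
    ∃ x, ∃ hx : x ∈ Squad n, toPart n x hx = pt := by
  have hu : u ∈ pt.parts := by rw [← Multiset.mem_toFinset, hT]; simp
  have hw : w ∈ pt.parts := by rw [← Multiset.mem_toFinset, hT]; simp
  have hi : 0 < pt.parts.count u := Multiset.count_pos.2 hu
  have hj : 0 < pt.parts.count w := Multiset.count_pos.2 hw
  have hw0 : 0 < w := pt.parts_pos hw
  have hM : pt.parts = Multiset.replicate (pt.parts.count u) u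
      + Multiset.replicate (pt.parts.count w) w := by
    conv_lhs => rw [← Multiset.toFinset_sum_count_nsmul_eq pt.parts]
    rw [hT, Finset.sum_pair (by omega : u ≠ w), Multiset.nsmul_singleton,
      Multiset.nsmul_singleton]
  have hsum : pt.parts.count u * u + pt.parts.count w * w = n := by
    have hs := pt.parts_sum
    rw [hM, Multiset.sum_add, Multiset.sum_replicate, Multiset.sum_replicate, smul_eq_mul,
      smul_eq_mul] at hs
    exact hs
  refine ⟨(u, w, pt.parts.count u, pt.parts.count w),
    mem_Squad'.2 ⟨hw0, hwu, hi, hj, hsum⟩, ?_⟩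
  apply Nat.Partition.ext
  rw [toPart_parts]
  exact hM.symm

lemma nu_two_eq_card_Squad (n : ℕ) : nu 2 n = (Squad n).card := by
  unfold nu
  refine (Finset.card_bij (toPart n) toPart_mem ?_ ?_).symm
  · rintro ⟨a, b, i, j⟩ hx ⟨a', b', i', j'⟩ hy heq
    obtain ⟨h1, h2, h3, h4, h5⟩ := mem_Squad'.1 hx
    obtain ⟨h1', h2', h3', h4', h5'⟩ := mem_Squad'.1 hy
    have := congrArg Nat.Partition.parts heq
    rw [toPart_parts, toPart_parts] at this
    obtain ⟨e1, e2, e3, e4⟩ := repl_inj h2 h2' h3 h4 h3' h4' this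
    simp [e1, e2, e3, e4]
  · intro pt hpt
    rw [Finset.mem_filter] at hpt
    have hcard : pt.parts.toFinset.card = 2 := hpt.2
    obtain ⟨u, w, huw, hT⟩ := Finset.card_eq_two.1 hcard
    rcases huw.lt_or_gt with hlt | hlt
    · exact toPart_surj_aux pt w u hlt (by rw [hT, Finset.pair_comm])
    · exact toPart_surj_aux pt u w hlt hT

theorem nu_two_even_of_two_odd_primes (n : ℕ)
    (h : 2 ≤ (n.primeFactors.filter (fun p => Odd (n.factorization p))).card) :
    2 ∣ nu 2 n := by
  obtain ⟨p₁, hp₁, p₂, hp₂, hne⟩ := Finset.one_lt_card.1 h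
  rw [Finset.mem_filter] at hp₁ hp₂
  obtain ⟨hm1, ho1⟩ := hp₁
  obtain ⟨hm2, ho2⟩ := hp₂
  rw [Nat.mem_primeFactors] at hm1 hm2
  have hn : n ≠ 0 := hm1.2.2
  have key : ∀ p q : ℕ, p.Prime → p ≠ 2 → Odd (n.factorization p) → q ≠ p →
      Odd (n.factorization q) → 2 ∣ nu 2 n := by
    intro p q pp hp2 hpv hqp hqv
    rw [nu_two_eq_card_Squad]
    exact (even_card_invol (Squad n) (gmap p (n.factorization p))
      (gmap_mem pp hp2 hn rfl hpv) (gmap_invol pp hp2 hn rfl hpv)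
      (gmap_ne pp hp2 hn rfl hpv hqp hqv)).two_dvd
  rcases eq_or_ne p₁ 2 with rfl | hp12
  · have hp22 : p₂ ≠ 2 := hne.symm
    exact key p₂ 2 hm2.1 hp22 ho2 (Ne.symm hp22) ho1
  · exact key p₁ p₂ hm1.1 hp12 ho1 hne.symm ho2
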